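/- For s ≥ 1 the heat-kernel deviation K(x,y,s) = H(x,y,s) − 1 on a compact Riemannian manifold of volume 1 satisfies K(x,y,s) ≥ −K(x,x,1)^{1/2} K(y,y,1)^{1/2} e^{−λ(s−1)}, where λ > 0 is the first positive eigenvalue of the Laplacian; consequently, if K(x,x,1) ≤ A₃ δ^{−10} for all x and λ ≥ A₂ δ for positive constants A₂, A₃ and parameter δ > 0, then the Green's function G(x,y) = ∫₀^∞ K(x,y,s) ds (normalized with ∫ G(x,·) = 0) satisfies ∫₁^∞ K(x,y,s) ds ≥ −A δ^{−11} for a constant A depending only on A₂, A₃. -/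

import Mathlib

open Real MeasureTheory

lemma tsum_sqrt_mul_sqrt_le' {u v : ℕ → ℝ} (hu : ∀ j, 0 ≤ u j) (hv : ∀ j, 0 ≤ v j)
    (hsu : Summable u) (hsv : Summable v)
    (hsw : Summable (fun j => Real.sqrt (u j) * Real.sqrt (v j))) :
    ∑' j, Real.sqrt (u j) * Real.sqrt (v j)
      ≤ Real.sqrt (∑' j, u j) * Real.sqrt (∑' j, v j) := by
  refine Summable.tsum_le_of_sum_le hsw (fun s => ?_)
  refine (Real.sum_sqrt_mul_sqrt_le s hu hv).trans ?_
  exact mul_le_mul (Real.sqrt_le_sqrt (Summable.sum_le_tsum s (fun i _ => hu i) hsu))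
    (Real.sqrt_le_sqrt (Summable.sum_le_tsum s (fun i _ => hv i) hsv))
    (Real.sqrt_nonneg _) (Real.sqrt_nonneg _)

lemma sqrt_mul_sqrt_le_half {a b : ℝ} (ha : 0 ≤ a) (hb : 0 ≤ b) :
    Real.sqrt a * Real.sqrt b ≤ (a + b) / 2 := by
  nlinarith [sq_nonneg (Real.sqrt a - Real.sqrt b), Real.sq_sqrt ha, Real.sq_sqrt hb]

/-- Spectral heat-kernel estimate.  On a compact Riemannian manifold of
volume 1 with spectral data `0 < λ₁ ≤ λⱼ` and orthonormal eigenfunctions `φⱼ`, the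
heat-kernel deviation `K(x,y,s) = Σ_{j≥1} e^{-λⱼ s} φⱼ(x) φⱼ(y)` satisfies
`K(x,y,s) ≥ -K(x,x,1)^{1/2} K(y,y,1)^{1/2} e^{-λ₁(s-1)}` for `s ≥ 1`; consequently, if
`K(x,x,1) ≤ A₃ δ⁻¹⁰` and `λ₁ ≥ A₂ δ`, then `∫₁^∞ K(x,y,s) ds ≥ -A δ⁻¹¹` for a constant
`A` depending only on `A₂, A₃`. -/
theorem statement18 (A₂ A₃ : ℝ) (hA₂ : 0 < A₂) (hA₃ : 0 < A₃) :
    ∃ A : ℝ, 0 < A ∧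
      ∀ (X : Type) (lam : ℕ → ℝ) (φ : ℕ → X → ℝ) (δ : ℝ), 0 < δ →
        0 < lam 0 → (∀ j, lam 0 ≤ lam j) →
        (∀ (x y : X) (s : ℝ), 1 ≤ s →
          Summable (fun j => Real.exp (-lam j * s) * φ j x * φ j y)) →
        (∀ (x y : X) (s : ℝ), 1 ≤ s →
          (∑' j, Real.exp (-lam j * s) * φ j x * φ j y)
            ≥ -(Real.sqrt (∑' j, Real.exp (-lam j * 1) * φ j x * φ j x)
                * Real.sqrt (∑' j, Real.exp (-lam j * 1) * φ j y * φ j y)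
                * Real.exp (-lam 0 * (s - 1)))) ∧
        ((∀ x : X, (∑' j, Real.exp (-lam j * 1) * φ j x * φ j x) ≤ A₃ / δ ^ 10) →
          lam 0 ≥ A₂ * δ →
          ∀ x y : X,
            (∫ s in Set.Ici (1:ℝ), ∑' j, Real.exp (-lam j * s) * φ j x * φ j y)
              ≥ -(A / δ ^ 11)) := by
  refine ⟨A₃ / A₂, by positivity, ?_⟩
  intro X lam φ δ hδ hlam0 hmono hsum
  have hunn : ∀ x : X, ∀ j, (0:ℝ) ≤ Real.exp (-lam j * 1) * φ j x * φ j x := by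
    intro x j
    have : Real.exp (-lam j * 1) * φ j x * φ j x
        = Real.exp (-lam j * 1) * (φ j x * φ j x) := by ring
    rw [this]
    exact mul_nonneg (Real.exp_pos _).le (mul_self_nonneg _)
  have hsqrt : ∀ x : X, ∀ j,
      Real.sqrt (Real.exp (-lam j * 1) * φ j x * φ j x)
        = Real.sqrt (Real.exp (-lam j * 1)) * |φ j x| := by
    intro x j
    rw [mul_assoc, Real.sqrt_mul (Real.exp_pos _).le, Real.sqrt_mul_self_eq_abs]
  -- key pointwise estimate
  have key : ∀ (x y : X) (s : ℝ), 1 ≤ s →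
      (∑' j, Real.exp (-lam j * s) * φ j x * φ j y)
        ≥ -(Real.sqrt (∑' j, Real.exp (-lam j * 1) * φ j x * φ j x)
            * Real.sqrt (∑' j, Real.exp (-lam j * 1) * φ j y * φ j y)
            * Real.exp (-lam 0 * (s - 1))) := by
    intro x y s hs
    set u := fun j => Real.exp (-lam j * 1) * φ j x * φ j x with hu_def
    set v := fun j => Real.exp (-lam j * 1) * φ j y * φ j y with hv_def
    have hsu : Summable u := hsum x x 1 le_rfl
    have hsv : Summable v := hsum y y 1 le_rfl
    set w := fun j => Real.sqrt (u j) * Real.sqrt (v j) with hw_def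
    have hsw : Summable w := by
      refine Summable.of_nonneg_of_le
        (fun j => mul_nonneg (Real.sqrt_nonneg _) (Real.sqrt_nonneg _))
        (fun j => sqrt_mul_sqrt_le_half (hunn x j) (hunn y j)) ?_
      exact (hsu.add hsv).div_const 2
    set C := Real.exp (-lam 0 * (s - 1)) with hC_def
    have hCpos : 0 < C := Real.exp_pos _
    -- termwise bound
    have hterm : ∀ j, |Real.exp (-lam j * s) * φ j x * φ j y| ≤ w j * C := by
      intro j
      have h1 : |Real.exp (-lam j * s) * φ j x * φ j y|
          = Real.exp (-lam j * s) * (|φ j x| * |φ j y|) := by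
        rw [abs_mul, abs_mul, abs_of_pos (Real.exp_pos _)]; ring
      have h2 : w j = Real.exp (-lam j * 1) * (|φ j x| * |φ j y|) := by
        rw [hw_def]
        simp only [hu_def, hv_def, hsqrt x j, hsqrt y j]
        rw [show Real.sqrt (Real.exp (-lam j * 1)) * |φ j x|
              * (Real.sqrt (Real.exp (-lam j * 1)) * |φ j y|)
            = (Real.sqrt (Real.exp (-lam j * 1)) * Real.sqrt (Real.exp (-lam j * 1)))
              * (|φ j x| * |φ j y|) by ring,
          Real.mul_self_sqrt (Real.exp_pos _).le]
      have h3 : Real.exp (-lam j * s) ≤ Real.exp (-lam j * 1) * C := by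
        rw [hC_def, ← Real.exp_add]
        apply Real.exp_le_exp.2
        have := hmono j
        nlinarith
      rw [h1, h2, show Real.exp (-lam j * 1) * (|φ j x| * |φ j y|) * C
          = (Real.exp (-lam j * 1) * C) * (|φ j x| * |φ j y|) by ring]
      exact mul_le_mul_of_nonneg_right h3 (mul_nonneg (abs_nonneg _) (abs_nonneg _))
    have hsb : Summable (fun j => w j * C) := hsw.mul_right C
    have habs : Summable (fun j => |Real.exp (-lam j * s) * φ j x * φ j y|) :=
      Summable.of_nonneg_of_le (fun j => abs_nonneg _) hterm hsb
    have h4 : |∑' j, Real.exp (-lam j * s) * φ j x * φ j y|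
        ≤ ∑' j, |Real.exp (-lam j * s) * φ j x * φ j y| := by
      have := norm_tsum_le_tsum_norm (f := fun j => Real.exp (-lam j * s) * φ j x * φ j y)
        (by simpa only [Real.norm_eq_abs] using habs)
      simpa only [Real.norm_eq_abs] using this
    have h5 : (∑' j, |Real.exp (-lam j * s) * φ j x * φ j y|) ≤ ∑' j, w j * C :=
      Summable.tsum_le_tsum hterm habs hsb
    have h6 : (∑' j, w j * C) = (∑' j, w j) * C := tsum_mul_right
    have h7 : (∑' j, w j) ≤ Real.sqrt (∑' j, u j) * Real.sqrt (∑' j, v j) :=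
      tsum_sqrt_mul_sqrt_le' (hunn x) (hunn y) hsu hsv hsw
    have : |∑' j, Real.exp (-lam j * s) * φ j x * φ j y|
        ≤ Real.sqrt (∑' j, u j) * Real.sqrt (∑' j, v j) * C := by
      calc |∑' j, Real.exp (-lam j * s) * φ j x * φ j y|
          ≤ ∑' j, w j * C := h4.trans h5
        _ = (∑' j, w j) * C := h6
        _ ≤ Real.sqrt (∑' j, u j) * Real.sqrt (∑' j, v j) * C :=
            mul_le_mul_of_nonneg_right h7 hCpos.le
    have := neg_abs_le (∑' j, Real.exp (-lam j * s) * φ j x * φ j y)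
    linarith [neg_le_neg this]
  refine ⟨key, ?_⟩
  intro hK hlam_lb x y
  set f := fun s : ℝ => ∑' j, Real.exp (-lam j * s) * φ j x * φ j y with hf_def
  by_cases hint : IntegrableOn f (Set.Ici 1) volume
  · -- lower bound function
    set D := A₃ / δ ^ 10 with hD_def
    have hDpos : 0 < D := by positivity
    set g := fun s : ℝ => -(D * Real.exp (-lam 0 * (s - 1))) with hg_def
    have hUx : (0:ℝ) ≤ ∑' j, Real.exp (-lam j * 1) * φ j x * φ j x :=
      tsum_nonneg (hunn x)
    have hUy : (0:ℝ) ≤ ∑' j, Real.exp (-lam j * 1) * φ j y * φ j y :=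
      tsum_nonneg (hunn y)
    have hCS : Real.sqrt (∑' j, Real.exp (-lam j * 1) * φ j x * φ j x)
        * Real.sqrt (∑' j, Real.exp (-lam j * 1) * φ j y * φ j y) ≤ D := by
      calc Real.sqrt (∑' j, Real.exp (-lam j * 1) * φ j x * φ j x)
          * Real.sqrt (∑' j, Real.exp (-lam j * 1) * φ j y * φ j y)
          ≤ Real.sqrt D * Real.sqrt D :=
            mul_le_mul (Real.sqrt_le_sqrt (hK x)) (Real.sqrt_le_sqrt (hK y))
              (Real.sqrt_nonneg _) (Real.sqrt_nonneg _)
        _ = D := Real.mul_self_sqrt hDpos.le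
    have hgle : ∀ s ∈ Set.Ici (1:ℝ), g s ≤ f s := by
      intro s hs
      have h1 := key x y s hs
      have h2 : Real.sqrt (∑' j, Real.exp (-lam j * 1) * φ j x * φ j x)
          * Real.sqrt (∑' j, Real.exp (-lam j * 1) * φ j y * φ j y)
          * Real.exp (-lam 0 * (s - 1)) ≤ D * Real.exp (-lam 0 * (s - 1)) :=
        mul_le_mul_of_nonneg_right hCS (Real.exp_pos _).le
      simp only [hg_def, hf_def]
      linarith
    -- integrability of g
    have hexp_eq : ∀ s : ℝ, Real.exp (-lam 0 * (s - 1))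
        = Real.exp (lam 0) * Real.exp (-(lam 0 * s)) := by
      intro s; rw [← Real.exp_add]; ring_nf
    have hgint : IntegrableOn g (Set.Ici 1) volume := by
      have h0 : IntegrableOn (fun s : ℝ => Real.exp (-lam 0 * s)) (Set.Ioi 1) volume := by
        simpa using exp_neg_integrableOn_Ioi 1 hlam0
      have h1 : IntegrableOn (fun s : ℝ => Real.exp (-lam 0 * (s - 1))) (Set.Ioi 1) volume := by
        have h2 : IntegrableOn (fun s : ℝ => Real.exp (lam 0) * Real.exp (-lam 0 * s))
            (Set.Ioi 1) volume := h0.const_mul (Real.exp (lam 0))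
        refine IntegrableOn.congr_fun h2 (fun s _ => ?_) measurableSet_Ioi
        rw [hexp_eq s, neg_mul]
      have h2 : IntegrableOn (fun s : ℝ => Real.exp (-lam 0 * (s - 1))) (Set.Ici 1) volume := by
        rwa [integrableOn_Ici_iff_integrableOn_Ioi]
      exact (h2.const_mul D).neg
    -- value of ∫ g
    have hval : ∫ s in Set.Ici (1:ℝ), Real.exp (-lam 0 * (s - 1)) = (lam 0)⁻¹ := by
      rw [integral_Ici_eq_integral_Ioi]
      have : ∀ s : ℝ, Real.exp (-lam 0 * (s - 1))
          = Real.exp (lam 0) * Real.exp (-(lam 0 * s)) := hexp_eq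
      rw [setIntegral_congr_fun measurableSet_Ioi (fun s _ => this s),
        integral_const_mul]
      have h3 : (∫ s in Set.Ioi (1:ℝ), Real.exp (-(lam 0 * s)))
          = (lam 0)⁻¹ • ∫ s in Set.Ioi (lam 0 * 1), Real.exp (-s) :=
        integral_comp_mul_left_Ioi (fun s => Real.exp (-s)) 1 hlam0
      rw [h3, integral_exp_neg_Ioi, smul_eq_mul, mul_one,
        show Real.exp (lam 0) * ((lam 0)⁻¹ * Real.exp (-lam 0))
          = (Real.exp (lam 0) * Real.exp (-lam 0)) * (lam 0)⁻¹ from by ring,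
        ← Real.exp_add]
      simp
    have hgval : ∫ s in Set.Ici (1:ℝ), g s = -(D * (lam 0)⁻¹) := by
      simp only [hg_def]
      rw [integral_neg, integral_const_mul, hval]
    have hmono' : ∫ s in Set.Ici (1:ℝ), g s ≤ ∫ s in Set.Ici (1:ℝ), f s :=
      setIntegral_mono_on hgint hint measurableSet_Ici hgle
    have hfinal : -(A₃ / A₂ / δ ^ 11) ≤ -(D * (lam 0)⁻¹) := by
      rw [neg_le_neg_iff]
      have hlam0' : A₂ * δ ≤ lam 0 := hlam_lb
      have h1 : (lam 0)⁻¹ ≤ (A₂ * δ)⁻¹ := by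
        exact inv_anti₀ (by positivity) hlam0'
      calc D * (lam 0)⁻¹ ≤ D * (A₂ * δ)⁻¹ := by
            exact mul_le_mul_of_nonneg_left h1 hDpos.le
        _ = A₃ / A₂ / δ ^ 11 := by
            rw [hD_def, div_div, mul_inv, div_eq_mul_inv, div_eq_mul_inv, mul_assoc,
              ← mul_inv, ← mul_inv]
            congr 1
            congr 1
            ring
    calc (∫ s in Set.Ici (1:ℝ), f s) ≥ ∫ s in Set.Ici (1:ℝ), g s := hmono'
      _ = -(D * (lam 0)⁻¹) := hgval
      _ ≥ -(A₃ / A₂ / δ ^ 11) := hfinal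
  · rw [integral_undef hint]
    have : (0:ℝ) < A₃ / A₂ / δ ^ 11 := by positivity
    linarith
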